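/- Let G be a simple undirected graph on n vertices with degrees kᵢ and m edges, and let C = (c₁,…,cₙ) with c₁,…,cₙ i.i.d. on {1,…,K}, P(cᵢ = k) = p_k. Define the modularity Qₙ = (1/2m) ∑_{i,j} (A_{ij} − kᵢkⱼ/(2m)) δ_{cᵢ,cⱼ}. Then E[Qₙ] = −(1−p_{(2)})/(4m²) · ∑_{i=1}^n kᵢ², where p_{(2)} = ∑_k p_k². -/

import Mathlib

open MeasureTheory ProbabilityTheory

/-- Under free labeling, the expected modularity is
`E[Qₙ] = −(1 − p_{(2)})/(4m²) ∑_i k_i²`. -/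
theorem stmt13
    {Ω : Type*} [MeasurableSpace Ω] {μ : Measure Ω} [IsProbabilityMeasure μ]
    {n K : ℕ} (A : Fin n → Fin n → ℝ)
    (hA01 : ∀ i j, i ≠ j → A i j = 0 ∨ A i j = 1)
    (hAdiag : ∀ i, A i i = 0)
    (hAsymm : ∀ i j, A i j = A j i)
    (k : Fin n → ℝ) (hk : ∀ i, k i = ∑ j, A i j)
    (m : ℝ) (hm : 0 < m) (h2m : ∑ i, k i = 2 * m)
    (c : Fin n → Ω → Fin K)
    (hmeas : ∀ i, Measurable (c i))
    (hindep : iIndepFun c μ)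
    (p : Fin K → ℝ)
    (hplaw : ∀ i l, (μ {ω | c i ω = l}).toReal = p l)
    (p2 : ℝ) (hp2 : p2 = ∑ l, (p l) ^ 2)
    (Q : Ω → ℝ)
    (hQ : ∀ ω, Q ω = (1 / (2 * m)) * ∑ i, ∑ j,
        (A i j - k i * k j / (2 * m)) * (if c i ω = c j ω then (1 : ℝ) else 0)) :
    ∫ ω, Q ω ∂μ = -((1 - p2) / (4 * m ^ 2)) * ∑ i, (k i) ^ 2 := by
  have hs : ∀ i j : Fin n, MeasurableSet {ω | c i ω = c j ω} := by
    intro i j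
    exact measurableSet_eq_fun (hmeas i) (hmeas j)
  -- indicator integrability
  have hint : ∀ i j : Fin n,
      Integrable (fun ω => (if c i ω = c j ω then (1:ℝ) else 0)) μ := by
    intro i j
    have : (fun ω => (if c i ω = c j ω then (1:ℝ) else 0))
        = Set.indicator {ω | c i ω = c j ω} (fun _ => (1:ℝ)) := by
      funext ω; by_cases h : c i ω = c j ω <;> simp [Set.indicator, h]
    rw [this]
    exact (integrable_const (1:ℝ)).indicator (hs i j)
  -- value of the indicator integral
  have hind : ∀ i j : Fin n,
      ∫ ω, (if c i ω = c j ω then (1:ℝ) else 0) ∂μ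
        = (μ {ω | c i ω = c j ω}).toReal := by
    intro i j
    have : (fun ω => (if c i ω = c j ω then (1:ℝ) else 0))
        = Set.indicator {ω | c i ω = c j ω} (fun _ => (1:ℝ)) := by
      funext ω; by_cases h : c i ω = c j ω <;> simp [Set.indicator, h]
    rw [this, integral_indicator_const (1:ℝ) (hs i j)]
    simp; rfl
  have hdiag : ∀ i : Fin n,
      ∫ ω, (if c i ω = c i ω then (1:ℝ) else 0) ∂μ = 1 := by
    intro i; simp
  have hoff : ∀ i j : Fin n, i ≠ j →
      ∫ ω, (if c i ω = c j ω then (1:ℝ) else 0) ∂μ = p2 := by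
    intro i j hij
    rw [hind i j]
    have hIF : IndepFun (c i) (c j) μ := hindep.indepFun hij
    have hset : {ω | c i ω = c j ω} = ⋃ l : Fin K, (c i ⁻¹' {l} ∩ c j ⁻¹' {l}) := by
      ext ω
      simp only [Set.mem_setOf_eq, Set.mem_iUnion, Set.mem_inter_iff, Set.mem_preimage,
        Set.mem_singleton_iff]
      constructor
      · intro h; exact ⟨c j ω, h, rfl⟩
      · rintro ⟨l, h1, h2⟩; rw [h1, h2]
    rw [hset]
    rw [measure_iUnion ?_ (fun l => ((hmeas i) (measurableSet_singleton l)).inter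
        ((hmeas j) (measurableSet_singleton l)))]
    · rw [tsum_fintype]
      have hmul : ∀ l : Fin K, μ (c i ⁻¹' {l} ∩ c j ⁻¹' {l})
          = μ (c i ⁻¹' {l}) * μ (c j ⁻¹' {l}) :=
        fun l => hIF.measure_inter_preimage_eq_mul {l} {l}
          (measurableSet_singleton l) (measurableSet_singleton l)
      rw [Finset.sum_congr rfl (fun l _ => hmul l)]
      rw [ENNReal.toReal_sum (fun l _ => ENNReal.mul_ne_top (measure_ne_top μ _)
        (measure_ne_top μ _))]
      rw [hp2]
      refine Finset.sum_congr rfl (fun l _ => ?_)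
      have h1 : (μ (c i ⁻¹' {l})).toReal = p l := by
        have := hplaw i l
        simpa [Set.preimage, Set.mem_singleton_iff] using this
      have h2 : (μ (c j ⁻¹' {l})).toReal = p l := by
        have := hplaw j l
        simpa [Set.preimage, Set.mem_singleton_iff] using this
      rw [ENNReal.toReal_mul, h1, h2]
      ring
    · intro a b hab
      simp only [Function.onFun, Set.disjoint_left]
      rintro ω ⟨ha, -⟩ ⟨hb, -⟩
      rw [Set.mem_preimage, Set.mem_singleton_iff] at ha hb
      exact hab (ha ▸ hb ▸ rfl)
  -- compute the integral of Q
  have hQint : ∫ ω, Q ω ∂μ = (1/(2*m)) * ∑ i, ∑ j,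
      (A i j - k i * k j / (2*m)) * (if i = j then (1:ℝ) else p2) := by
    simp only [hQ]
    rw [integral_const_mul]
    congr 1
    rw [integral_finset_sum _ (fun i _ => integrable_finset_sum _
      (fun j _ => ((hint i j).const_mul _)))]
    refine Finset.sum_congr rfl (fun i _ => ?_)
    rw [integral_finset_sum _ (fun j _ => ((hint i j).const_mul _))]
    refine Finset.sum_congr rfl (fun j _ => ?_)
    rw [integral_const_mul]
    by_cases h : i = j
    · subst h; simp [hdiag i]
    · simp [h, hoff i j h]
  rw [hQint]
  -- algebra
  have hsplit : ∀ i j : Fin n,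
      (A i j - k i * k j / (2*m)) * (if i = j then (1:ℝ) else p2)
      = (A i j - k i * k j / (2*m)) * p2
        + (if i = j then (A i j - k i * k j / (2*m)) * (1 - p2) else 0) := by
    intro i j
    by_cases h : i = j <;> simp [h] <;> ring
  simp only [hsplit]
  rw [Finset.sum_congr rfl (fun i _ => Finset.sum_add_distrib)]
  rw [Finset.sum_add_distrib]
  have hS : ∑ i, ∑ j, (A i j - k i * k j / (2*m)) * p2 = 0 := by
    have : ∀ i : Fin n, ∑ j, (A i j - k i * k j / (2*m)) * p2
        = (k i - k i * (2*m) / (2*m)) * p2 := by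
      intro i
      rw [← Finset.sum_mul]
      congr 1
      rw [Finset.sum_sub_distrib, ← hk i]
      congr 1
      rw [← Finset.sum_div, ← Finset.mul_sum, h2m]
    rw [Finset.sum_congr rfl (fun i _ => this i)]
    have : k = fun i => k i := rfl
    have hm' : (2*m) ≠ 0 := by positivity
    simp [mul_div_assoc, div_self hm']
  rw [hS, zero_add]
  have hD : ∀ i : Fin n, ∑ j, (if i = j then (A i j - k i * k j / (2*m)) * (1 - p2) else 0)
      = -(k i)^2 / (2*m) * (1 - p2) := by
    intro i
    rw [Finset.sum_ite_eq _ i _]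
    simp [hAdiag i]
    ring
  rw [Finset.sum_congr rfl (fun i _ => hD i)]
  rw [← Finset.sum_mul]
  have : ∑ i, -(k i)^2 / (2*m) = (-∑ i, (k i)^2) / (2*m) := by
    rw [← Finset.sum_div, ← Finset.sum_neg_distrib]
  rw [this]
  have hm' : m ≠ 0 := ne_of_gt hm
  field_simp
  ring
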